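/- Let B be a ring and G^• a cochain complex of B-modules vanishing in degrees greater than some n. If every term G^i and every cohomology module H^i(G^•) is B-flat, then all cocycle modules Z^i and coboundary modules N^i are B-flat, and for every B-module L and every i, the natural map H^i(G^•) ⊗_B L → H^i(G^• ⊗_B L) is an isomorphism. -/

import Mathlib

/-!
STATEMENT 5.  `B` a ring, `G^•` a cochain complex of `B`-modules (differentials
`d i : G i → G (i+1)`, `d ∘ d = 0`) vanishing in degrees `> n`.  If every term
`G i` and every cohomology module `H^i = ker (d i) / im (d (i-1))` is `B`-flat,
then all cocycle modules `Z^i = ker (d i)` and coboundary modules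
`N^i = im (d (i-1))` are `B`-flat, and for every `B`-module `L` and every
degree, the natural map `H^i(G^•) ⊗_B L → H^i(G^• ⊗_B L)` (induced by
`z ⊗ l ↦ z ⊗ l` on cocycles) is an isomorphism.  (Cohomology in degree `i+1`
for all `i : ℤ` covers all degrees.)
-/

open scoped TensorProduct
open LinearMap

universe u

section Aux

variable {R M L F : Type*} [CommRing R] [AddCommGroup M] [Module R M]
  [AddCommGroup L] [Module R L] [AddCommGroup F] [Module R F]

lemma aux_key (A : Submodule R M) (hC : Module.Flat R (M ⧸ A)) (hF : Module.Flat R F)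
    (p : F →ₗ[R] L) (hp : Function.Surjective p)
    (x : (↥A) ⊗[R] L) (hx : rTensor L A.subtype x = 0) : x = 0 := by
  obtain ⟨y, hy⟩ := lTensor_surjective A hp x
  have h1 : lTensor M p (rTensor F A.subtype y) = 0 := by
    have hc : (lTensor M p).comp (rTensor F A.subtype)
        = (rTensor L A.subtype).comp (lTensor A p) := by
      rw [lTensor_comp_rTensor, rTensor_comp_lTensor]
    have := LinearMap.congr_fun hc y
    simp only [coe_comp, Function.comp_apply] at this
    rw [this, hy, hx]
  have hexact1 : Function.Exact (lTensor M (ker p).subtype) (lTensor M p) :=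
    lTensor_exact M (exact_subtype_ker_map p) hp
  obtain ⟨w, hw⟩ := (hexact1 _).mp h1
  have h2 : lTensor (M ⧸ A) (ker p).subtype (rTensor (ker p) A.mkQ w) = 0 := by
    have hc : (lTensor (M ⧸ A) (ker p).subtype).comp (rTensor (ker p) A.mkQ)
        = (rTensor F A.mkQ).comp (lTensor M (ker p).subtype) := by
      rw [lTensor_comp_rTensor, rTensor_comp_lTensor]
    have := LinearMap.congr_fun hc w
    simp only [coe_comp, Function.comp_apply] at this
    rw [this, hw]
    have h0 : ((rTensor F A.mkQ).comp (rTensor F A.subtype)) = 0 := by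
      rw [← rTensor_comp]
      have : A.mkQ.comp A.subtype = 0 := by ext a; simp
      rw [this, rTensor_zero]
    have := LinearMap.congr_fun h0 y
    simpa only [coe_comp, Function.comp_apply, LinearMap.zero_apply] using this
  have h3 : rTensor (ker p) A.mkQ w = 0 := by
    apply Module.Flat.lTensor_preserves_injective_linearMap
      (M := M ⧸ A) (ker p).subtype (ker p).injective_subtype
    rw [h2, map_zero]
  have hexact2 : Function.Exact (rTensor (ker p) A.subtype) (rTensor (ker p) A.mkQ) :=
    rTensor_exact (ker p) (exact_subtype_mkQ A) (Submodule.mkQ_surjective A)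
  obtain ⟨v, hv⟩ := (hexact2 _).mp h3
  have h5 : y = lTensor A (ker p).subtype v := by
    apply Module.Flat.rTensor_preserves_injective_linearMap
      (M := F) A.subtype A.injective_subtype
    have hc : (rTensor F A.subtype).comp (lTensor A (ker p).subtype)
        = (lTensor M (ker p).subtype).comp (rTensor (ker p) A.subtype) := by
      rw [lTensor_comp_rTensor, rTensor_comp_lTensor]
    have := LinearMap.congr_fun hc v
    simp only [coe_comp, Function.comp_apply] at this
    rw [this, hv, hw]
  have hpk : p.comp (ker p).subtype = 0 := by ext a; exact a.2
  calc x = lTensor A p y := hy.symm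
    _ = lTensor A p (lTensor A (ker p).subtype v) := by rw [← h5]
    _ = lTensor A (p.comp (ker p).subtype) v := by
        rw [lTensor_comp]; rfl
    _ = 0 := by rw [hpk, lTensor_zero]; rfl

/-- If `M ⧸ A` is flat, then `A ⊗ L → M ⊗ L` is injective for every `L`. -/
lemma aux_rTensor_subtype_injective (A : Submodule R M) (hC : Module.Flat R (M ⧸ A)) :
    Function.Injective (rTensor L A.subtype) := by
  classical
  intro a b hab
  have := aux_key A hC (Module.Flat.finsupp (R := R) L)
    (Finsupp.linearCombination R (id : L → L))
    (Finsupp.linearCombination_id_surjective R L)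
    (a - b) (by rw [map_sub, hab, sub_self])
  exact sub_eq_zero.mp this

/-- If `M` and `M ⧸ A` are flat, then `A` is flat. -/
lemma aux_flat_submodule (A : Submodule R M) (hM : Module.Flat R M)
    (hC : Module.Flat R (M ⧸ A)) : Module.Flat R A := by
  haveI := hM
  rw [Module.Flat.iff_lTensor_preserves_injective_linearMap]
  intro N N' _ _ _ _ f hf
  have h1 : Function.Injective (rTensor N A.subtype) :=
    aux_rTensor_subtype_injective A hC
  have h2 : Function.Injective (f.lTensor M) :=
    Module.Flat.lTensor_preserves_injective_linearMap f hf
  have hcomm : (rTensor N' A.subtype).comp (f.lTensor A)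
      = (f.lTensor M).comp (rTensor N A.subtype) := by
    rw [rTensor_comp_lTensor, lTensor_comp_rTensor]
  have hinj : Function.Injective ⇑((rTensor N' A.subtype).comp (f.lTensor A)) := by
    rw [hcomm, coe_comp]
    exact h2.comp h1
  rw [coe_comp] at hinj
  exact hinj.of_comp

end Aux

set_option maxHeartbeats 1600000 in
theorem flat_complex_base_change
    (B : Type u) [CommRing B] (n : ℤ)
    (G : ℤ → Type u) [∀ i, AddCommGroup (G i)] [∀ i, Module B (G i)]
    (d : ∀ i : ℤ, G i →ₗ[B] G (i + 1))
    (hdd : ∀ i : ℤ, (d (i + 1)).comp (d i) = 0)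
    (hvanish : ∀ i : ℤ, n < i → Subsingleton (G i))
    (hflatG : ∀ i : ℤ, Module.Flat B (G i))
    (hflatH : ∀ i : ℤ, Module.Flat B
      (↥(LinearMap.ker (d (i + 1))) ⧸
        Submodule.comap (LinearMap.ker (d (i + 1))).subtype (LinearMap.range (d i)))) :
    (∀ i : ℤ, Module.Flat B ↥(LinearMap.ker (d i)) ∧
        Module.Flat B ↥(LinearMap.range (d i))) ∧
    (∀ (L : Type u) [AddCommGroup L] [Module B L], ∀ i : ℤ,
      ∃ e : ((↥(LinearMap.ker (d (i + 1))) ⧸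
            Submodule.comap (LinearMap.ker (d (i + 1))).subtype
              (LinearMap.range (d i))) ⊗[B] L)
          ≃ₗ[B]
          (↥(LinearMap.ker (LinearMap.rTensor L (d (i + 1)))) ⧸
            Submodule.comap (LinearMap.ker (LinearMap.rTensor L (d (i + 1)))).subtype
              (LinearMap.range (LinearMap.rTensor L (d i)))),
        ∀ (z : ↥(LinearMap.ker (d (i + 1)))) (l : L)
          (hzl : (z : G (i + 1)) ⊗ₜ[B] l ∈ LinearMap.ker (LinearMap.rTensor L (d (i + 1)))),
          e ((Submodule.Quotient.mk z) ⊗ₜ[B] l) = Submodule.Quotient.mk ⟨_, hzl⟩) := by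
  have hdd' : ∀ i : ℤ, LinearMap.range (d i) ≤ LinearMap.ker (d (i + 1)) := by
    rintro i x ⟨y, rfl⟩
    simpa [LinearMap.mem_ker] using LinearMap.congr_fun (hdd i) y
  have part1 : ∀ i : ℤ, Module.Flat B ↥(LinearMap.ker (d i)) ∧
      Module.Flat B ↥(LinearMap.range (d i)) := by
    have key : ∀ k : ℕ, ∀ i : ℤ, n ≤ i + k →
        Module.Flat B ↥(LinearMap.ker (d i)) ∧ Module.Flat B ↥(LinearMap.range (d i)) := by
      intro k
      induction k with
      | zero =>
        intro i hi
        simp only [Nat.cast_zero, add_zero] at hi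
        haveI hsub : Subsingleton (G (i + 1)) := hvanish _ (by omega)
        have hker : LinearMap.ker (d i) = ⊤ := by
          ext x
          simp only [LinearMap.mem_ker, Submodule.mem_top, iff_true]
          exact Subsingleton.elim _ _
        constructor
        · haveI := hflatG i
          exact Module.Flat.of_linearEquiv
            ((LinearEquiv.ofEq _ _ hker).trans (Submodule.topEquiv))
        · haveI : Subsingleton ↥(LinearMap.range (d i)) :=
            ⟨fun a b => Subtype.ext (Subsingleton.elim _ _)⟩
          infer_instance
      | succ k ih =>
        intro i hi
        have hZ1 : Module.Flat B ↥(LinearMap.ker (d (i + 1))) :=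
          (ih (i + 1) (by push_cast at hi ⊢; omega)).1
        have hNflat : Module.Flat B
            ↥(Submodule.comap (LinearMap.ker (d (i + 1))).subtype (LinearMap.range (d i))) :=
          aux_flat_submodule _ hZ1 (hflatH i)
        have hRflat : Module.Flat B ↥(LinearMap.range (d i)) :=
          Module.Flat.of_linearEquiv (Submodule.comapSubtypeEquivOfLe (hdd' i)).symm
        have hKflat : Module.Flat B ↥(LinearMap.ker (d i)) := by
          have hq : Module.Flat B (G i ⧸ LinearMap.ker (d i)) :=
            Module.Flat.of_linearEquiv ((d i).quotKerEquivRange)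
          exact aux_flat_submodule _ (hflatG i) hq
        exact ⟨hKflat, hRflat⟩
    intro i
    exact key (n - i).toNat i (by omega)
  refine ⟨part1, ?_⟩
  intro L _ _ i
  -- notation
  set Z : Submodule B (G (i + 1)) := LinearMap.ker (d (i + 1)) with hZdef
  set Nsub : Submodule B ↥Z := Submodule.comap Z.subtype (LinearMap.range (d i)) with hNdef
  set τ : (G (i + 1) ⊗[B] L) →ₗ[B] (G (i + 1 + 1) ⊗[B] L) := rTensor L (d (i + 1)) with hτdef
  set S : ((↥Z) ⊗[B] L) →ₗ[B] (G (i + 1) ⊗[B] L) := rTensor L Z.subtype with hSdef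
  -- flatness of quotients
  have hqZ : Module.Flat B (G (i + 1) ⧸ Z) := by
    haveI := (part1 (i + 1)).2
    exact Module.Flat.of_linearEquiv ((d (i + 1)).quotKerEquivRange)
  have hSinj : Function.Injective S := aux_rTensor_subtype_injective Z hqZ
  -- injectivity of R2 ⊗ L → G(i+2) ⊗ L
  have hinjR2 : Function.Injective (rTensor L (LinearMap.range (d (i + 1))).subtype) := by
    set Z2 : Submodule B (G (i + 1 + 1)) := LinearMap.ker (d (i + 1 + 1)) with hZ2def
    have hle : LinearMap.range (d (i + 1)) ≤ Z2 := hdd' (i + 1)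
    set N2 : Submodule B ↥Z2 := Submodule.comap Z2.subtype (LinearMap.range (d (i + 1)))
      with hN2def
    have hqZ2 : Module.Flat B (G (i + 1 + 1) ⧸ Z2) := by
      haveI := (part1 (i + 1 + 1)).2
      exact Module.Flat.of_linearEquiv ((d (i + 1 + 1)).quotKerEquivRange)
    have inj_a : Function.Injective (rTensor L Z2.subtype) :=
      aux_rTensor_subtype_injective Z2 hqZ2
    have inj_b : Function.Injective (rTensor L N2.subtype) :=
      aux_rTensor_subtype_injective N2 (hflatH (i + 1))
    set e2 : ↥(LinearMap.range (d (i + 1))) →ₗ[B] ↥N2 :=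
      (Submodule.comapSubtypeEquivOfLe hle).symm.toLinearMap with he2def
    set e2' : ↥N2 →ₗ[B] ↥(LinearMap.range (d (i + 1))) :=
      (Submodule.comapSubtypeEquivOfLe hle).toLinearMap with he2'def
    have inj_c : Function.Injective (rTensor L e2) := by
      have h1 : (rTensor L e2').comp (rTensor L e2) = LinearMap.id := by
        rw [← rTensor_comp]
        have he : e2'.comp e2 = LinearMap.id := by
          ext x
          simp [e2, e2']
        rw [he, rTensor_id]
      intro a b hab
      have := congrArg (rTensor L e2') hab
      rw [← comp_apply, ← comp_apply, h1, LinearMap.id_apply, LinearMap.id_apply] at this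
      exact this
    have hfac : Z2.subtype.comp (N2.subtype.comp e2)
        = (LinearMap.range (d (i + 1))).subtype := by
      ext x; rfl
    have hbig : Function.Injective
        ⇑((rTensor L Z2.subtype).comp ((rTensor L N2.subtype).comp
          (rTensor L e2))) := by
      rw [coe_comp, coe_comp]
      exact inj_a.comp (inj_b.comp inj_c)
    rw [← rTensor_comp, ← rTensor_comp, hfac] at hbig
    exact hbig
  -- range S = ker τ
  have hcomp0 : (d (i + 1)).comp Z.subtype = 0 := by
    ext z; exact z.2
  have hrange : LinearMap.range S = LinearMap.ker τ := by
    apply le_antisymm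
    · rintro x ⟨v, rfl⟩
      have : τ.comp S = 0 := by
        rw [hτdef, hSdef, ← rTensor_comp, hcomp0, rTensor_zero]
      simpa [LinearMap.mem_ker] using LinearMap.congr_fun this v
    · intro x hx
      have hx0 : τ x = 0 := hx
      set ρ : G (i + 1) →ₗ[B] ↥(LinearMap.range (d (i + 1))) := (d (i + 1)).rangeRestrict
        with hρdef
      have hρsurj : Function.Surjective ρ := (d (i + 1)).surjective_rangeRestrict
      have hfacρ : (LinearMap.range (d (i + 1))).subtype.comp ρ = d (i + 1) := by
        ext y; rfl
      have hρx : rTensor L ρ x = 0 := by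
        apply hinjR2
        rw [map_zero, ← comp_apply, ← rTensor_comp, hfacρ]
        exact hx0
      have hex : Function.Exact Z.subtype ρ := by
        intro y
        constructor
        · intro h
          have hy : d (i + 1) y = 0 := by
            rw [← hfacρ]
            simp only [coe_comp, Function.comp_apply, h, map_zero]
          exact ⟨⟨y, hy⟩, rfl⟩
        · rintro ⟨z, rfl⟩
          exact Subtype.ext z.2
      have hexT : Function.Exact S (rTensor L ρ) := rTensor_exact L hex hρsurj
      obtain ⟨v, hv⟩ := (hexT x).mp hρx
      exact ⟨v, hv⟩
  -- the forward map
  have hmemker : ∀ x : (↥Z) ⊗[B] L, S x ∈ LinearMap.ker τ := by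
    intro x
    rw [← hrange]
    exact ⟨x, rfl⟩
  set ψ : ((↥Z) ⊗[B] L) →ₗ[B] ↥(LinearMap.ker τ) :=
    LinearMap.codRestrict (LinearMap.ker τ) S hmemker with hψdef
  set K' : Submodule B ↥(LinearMap.ker τ) :=
    Submodule.comap (LinearMap.ker τ).subtype (LinearMap.range (rTensor L (d i))) with hK'def
  set g0 : ((↥Z) ⊗[B] L) →ₗ[B] (↥(LinearMap.ker τ) ⧸ K') := K'.mkQ.comp ψ with hg0def
  have hNker : Nsub ≤ LinearMap.ker (TensorProduct.curry g0) := by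
    intro z hz
    obtain ⟨w, hw⟩ := hz
    rw [LinearMap.mem_ker]
    ext l
    simp only [TensorProduct.curry_apply, LinearMap.zero_apply]
    rw [hg0def]
    simp only [coe_comp, Function.comp_apply, Submodule.mkQ_apply]
    rw [Submodule.Quotient.mk_eq_zero]
    rw [hK'def, Submodule.mem_comap]
    refine ⟨w ⊗ₜ[B] l, ?_⟩
    have hco : (ψ (z ⊗ₜ[B] l) : G (i + 1) ⊗[B] L) = (z : G (i + 1)) ⊗ₜ[B] l := rfl
    rw [rTensor_tmul, Submodule.subtype_apply, hco, hw]
    rfl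
  set φ : (↥Z ⧸ Nsub) →ₗ[B] (L →ₗ[B] (↥(LinearMap.ker τ) ⧸ K')) :=
    Submodule.liftQ Nsub (TensorProduct.curry g0) hNker with hφdef
  set f : ((↥Z ⧸ Nsub) ⊗[B] L) →ₗ[B] (↥(LinearMap.ker τ) ⧸ K') := TensorProduct.lift φ
    with hfdef
  have hcomm : f.comp (rTensor L Nsub.mkQ) = g0 := by
    apply TensorProduct.ext'
    intro z l
    simp only [coe_comp, Function.comp_apply, rTensor_tmul, hfdef, TensorProduct.lift.tmul,
      hφdef, Submodule.mkQ_apply, Submodule.liftQ_apply, TensorProduct.curry_apply]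
  -- surjectivity
  have hfsurj : Function.Surjective f := by
    intro t
    obtain ⟨u, rfl⟩ := K'.mkQ_surjective t
    have hu : (u : G (i + 1) ⊗[B] L) ∈ LinearMap.range S := by
      rw [hrange]; exact u.2
    obtain ⟨v, hv⟩ := hu
    refine ⟨rTensor L Nsub.mkQ v, ?_⟩
    have h1 : f (rTensor L Nsub.mkQ v) = g0 v := by
      rw [← comp_apply, hcomm]
    rw [h1, hg0def]
    simp only [coe_comp, Function.comp_apply, Submodule.mkQ_apply]
    congr 1
    exact Subtype.ext hv
  -- injectivity
  have hfinj : Function.Injective f := by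
    have key : ∀ x, f x = 0 → x = 0 := by
      intro x hx
      obtain ⟨v, rfl⟩ := rTensor_surjective L (Submodule.mkQ_surjective Nsub) x
      have hx' : g0 v = 0 := by
        rw [← hcomm]
        exact hx
      have h1 : ψ v ∈ K' := by
        rw [hg0def] at hx'
        simp only [coe_comp, Function.comp_apply, Submodule.mkQ_apply] at hx'
        rwa [Submodule.Quotient.mk_eq_zero] at hx'
      have h2 : S v ∈ LinearMap.range (rTensor L (d i)) := h1
      obtain ⟨w, hw⟩ := h2
      have hZmem : ∀ x, d i x ∈ Z := fun x => hdd' i ⟨x, rfl⟩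
      set δ : G i →ₗ[B] ↥Nsub :=
        LinearMap.codRestrict Nsub (LinearMap.codRestrict Z (d i) hZmem)
          (fun x => ⟨x, rfl⟩) with hδdef
      have hfac : (d i) = Z.subtype.comp (Nsub.subtype.comp δ) := by
        ext x; rfl
      have hv' : v = rTensor L Nsub.subtype (rTensor L δ w) := by
        apply hSinj
        rw [← hw, hfac, rTensor_comp, rTensor_comp, hSdef]
        rw [comp_apply, comp_apply]
      rw [hv', ← comp_apply, ← rTensor_comp]
      have h0 : Nsub.mkQ.comp Nsub.subtype = 0 := by
        ext a
        simp only [coe_comp, Function.comp_apply, Submodule.mkQ_apply, LinearMap.zero_apply,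
          Submodule.Quotient.mk_eq_zero]
        exact a.2
      rw [h0, rTensor_zero, LinearMap.zero_apply]
    intro a b hab
    have := key (a - b) (by rw [map_sub, hab, sub_self])
    exact sub_eq_zero.mp this
  refine ⟨LinearEquiv.ofBijective f ⟨hfinj, hfsurj⟩, ?_⟩
  intro z l hzl
  show f ((Submodule.Quotient.mk z) ⊗ₜ[B] l) = _
  have h1 : (Submodule.Quotient.mk z : ↥Z ⧸ Nsub) ⊗ₜ[B] l
      = rTensor L Nsub.mkQ (z ⊗ₜ[B] l) := by
    rw [rTensor_tmul]; rfl
  rw [h1, ← comp_apply, hcomm, hg0def]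
  simp only [coe_comp, Function.comp_apply, Submodule.mkQ_apply]
  congr 1
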